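/- If L is a context-free language over a finite alphabet Σ and R is a regular language over Σ, then L ∩ R is context-free. -/

import Mathlib

namespace BarHillel

variable {T : Type} {σ : Type}

open Symbol

/-- New nonterminals: triples (state, old symbol, state), plus a fresh start. -/
abbrev N' (σ : Type) (g : ContextFreeGrammar.{0} T) : Type := Option (σ × (g.NT ⊕ T) × σ)

def sym (g : ContextFreeGrammar.{0} T) : Symbol T g.NT → g.NT ⊕ T
  | .terminal a => .inr a
  | .nonterminal X => .inl X

variable (g : ContextFreeGrammar.{0} T) in
/-- `Ann p u u' q` : `u'` is an annotation of `u` by a chain of states from `p` to `q`. -/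
inductive Ann : σ → List (Symbol T g.NT) → List (Symbol T (N' σ g)) → σ → Prop
  | nil (p : σ) : Ann p [] [] p
  | cons (p m q : σ) (x : Symbol T g.NT) {rest : List (Symbol T g.NT)}
      {rest' : List (Symbol T (N' σ g))} (h : Ann m rest rest' q) :
      Ann p (x :: rest) (Symbol.nonterminal (some (p, sym g x, m)) :: rest') q

variable {g : ContextFreeGrammar.{0} T}

lemma Ann.nil_inv {p q : σ} {o : List (Symbol T (N' σ g))} (h : Ann g p [] o q) :
    o = [] ∧ q = p := by cases h; exact ⟨rfl, rfl⟩

lemma Ann.append {p m q : σ} {u₁ u₂ : List (Symbol T g.NT)}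
    {o₁ o₂ : List (Symbol T (N' σ g))} (h₁ : Ann g p u₁ o₁ m) (h₂ : Ann g m u₂ o₂ q) :
    Ann g p (u₁ ++ u₂) (o₁ ++ o₂) q := by
  induction h₁ with
  | nil => exact h₂
  | cons p m' q' x h ih => exact Ann.cons _ _ _ _ (ih h₂)

lemma Ann.append_inv {p q : σ} {u₁ u₂ : List (Symbol T g.NT)}
    {o : List (Symbol T (N' σ g))} (h : Ann g p (u₁ ++ u₂) o q) :
    ∃ o₁ o₂ m, o = o₁ ++ o₂ ∧ Ann g p u₁ o₁ m ∧ Ann g m u₂ o₂ q := by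
  induction u₁ generalizing p o with
  | nil => exact ⟨[], o, p, rfl, Ann.nil p, h⟩
  | cons x rest ih =>
    cases h with
    | cons p m q x h' =>
      obtain ⟨o₁, o₂, m', rfl, hh₁, hh₂⟩ := ih h'
      exact ⟨_ :: o₁, o₂, m', rfl, Ann.cons _ _ _ _ hh₁, hh₂⟩

lemma Ann.singleton_inv {p q : σ} {x : Symbol T g.NT} {o : List (Symbol T (N' σ g))}
    (h : Ann g p [x] o q) : o = [Symbol.nonterminal (some (p, sym g x, q))] := by
  cases h with
  | cons p m q x h' => obtain ⟨rfl, rfl⟩ := h'.nil_inv; rfl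

lemma ann_finite (u : List (Symbol T g.NT)) (p : σ) [Fintype σ] :
    {y : List (Symbol T (N' σ g)) × σ | Ann g p u y.1 y.2}.Finite := by
  induction u generalizing p with
  | nil =>
    apply Set.Finite.subset (Set.finite_singleton (([] : List (Symbol T (N' σ g))), p))
    rintro ⟨o, q⟩ h
    obtain ⟨rfl, rfl⟩ := Ann.nil_inv h
    rfl
  | cons x rest ih =>
    apply Set.Finite.subset
      (Set.finite_iUnion (fun m : σ =>
        ((ih m).image (fun y => (Symbol.nonterminal (some (p, sym g x, m)) :: y.1, y.2)))))
    rintro ⟨o, q⟩ h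
    cases h with
    | cons p m q x h' =>
      exact Set.mem_iUnion.2 ⟨m, ⟨(_, q), h', rfl⟩⟩


section Grammar

variable [Fintype T] [Fintype σ] (g : ContextFreeGrammar.{0} T) (M : DFA T σ)

def startRules : Set (ContextFreeRule T (N' σ g)) :=
  (fun q => ⟨none, [Symbol.nonterminal (some (M.start, Sum.inl g.initial, q))]⟩) '' M.accept

def liftRules (σ : Type) (g : ContextFreeGrammar.{0} T) : Set (ContextFreeRule T (N' σ g)) :=
  { r' | ∃ r ∈ g.rules, ∃ p q o, Ann g p r.output o q ∧
      r' = ⟨some (p, Sum.inl r.input, q), o⟩ }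

def termRules : Set (ContextFreeRule T (N' σ g)) :=
  Set.range (fun pa : σ × T => ⟨some (pa.1, Sum.inr pa.2, M.step pa.1 pa.2), [Symbol.terminal pa.2]⟩)

lemma rules_finite : (startRules g M ∪ liftRules σ g ∪ termRules g M).Finite := by
  refine ((Set.Finite.union ?_ ?_).union ?_)
  · exact (Set.toFinite M.accept).image _
  · have : liftRules σ g ⊆ ⋃ r ∈ (g.rules : Set (ContextFreeRule T g.NT)), ⋃ p : σ,
        (fun y : List (Symbol T (N' σ g)) × σ =>
          (⟨some (p, Sum.inl r.input, y.2), y.1⟩ : ContextFreeRule T (N' σ g))) ''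
          {y | Ann g p r.output y.1 y.2} := by
      rintro r' ⟨r, hr, p, q, o, hann, rfl⟩
      refine Set.mem_biUnion hr (Set.mem_iUnion.2 ⟨p, ⟨(o, q), hann, rfl⟩⟩)
    exact Set.Finite.subset
      (Set.Finite.biUnion g.rules.finite_toSet fun r _ =>
        Set.finite_iUnion fun p => (ann_finite r.output p).image _) this
  · exact Set.finite_range _

@[reducible] noncomputable def prodGrammar : ContextFreeGrammar.{0} T :=
  ⟨N' σ g, none, (rules_finite g M).toFinset⟩

lemma mem_prod_rules {r : ContextFreeRule T (N' σ g)} :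
    r ∈ (prodGrammar g M).rules ↔
      r ∈ startRules g M ∨ r ∈ liftRules σ g ∨ r ∈ termRules g M := by
  simp [prodGrammar, Set.Finite.mem_toFinset, or_assoc]

end Grammar


section Sound

variable [Fintype T] [Fintype σ]

def proj (σ : Type) (g : ContextFreeGrammar.{0} T) : Symbol T (N' σ g) → List (Symbol T g.NT)
  | .terminal a => [.terminal a]
  | .nonterminal none => [.nonterminal g.initial]
  | .nonterminal (some (_, .inl X, _)) => [.nonterminal X]
  | .nonterminal (some (_, .inr a, _)) => [.terminal a]

omit [Fintype T] [Fintype σ] in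
lemma proj_sym (x : Symbol T g.NT) (p q : σ) :
    proj σ g (Symbol.nonterminal (some (p, sym g x, q))) = [x] := by
  cases x <;> rfl

omit [Fintype T] [Fintype σ] in
lemma proj_ann {p q : σ} {u : List (Symbol T g.NT)} {o : List (Symbol T (N' σ g))}
    (h : Ann g p u o q) : o.flatMap (proj σ g) = u := by
  induction h with
  | nil => rfl
  | cons p m q x h ih => simp [List.flatMap_cons, proj_sym, ih]

omit [Fintype T] [Fintype σ] in
lemma proj_map_terminal (w : List T) :
    (w.map (Symbol.terminal : T → Symbol T (N' σ g))).flatMap (proj σ g)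
      = w.map Symbol.terminal := by
  induction w with
  | nil => rfl
  | cons a w ih => simp only [List.map_cons, List.flatMap_cons, ih, proj]; rfl

lemma derives_proj (M : DFA T σ) {u v : List (Symbol T (N' σ g))}
    (h : (prodGrammar g M).Derives u v) :
    g.Derives (u.flatMap (proj σ g)) (v.flatMap (proj σ g)) := by
  induction h with
  | refl => rfl
  | tail _ hp ih =>
    refine ih.trans ?_
    obtain ⟨r, hr, hrw⟩ := hp
    obtain ⟨s, t, rfl, rfl⟩ := hrw.exists_parts
    simp only [List.flatMap_append]
    apply ContextFreeGrammar.Derives.append_right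
    apply ContextFreeGrammar.Derives.append_left
    rw [List.flatMap_cons, List.flatMap_nil, List.append_nil]
    rcases (mem_prod_rules g M).1 hr with hs | hl | ht
    · obtain ⟨q, hq, rfl⟩ := hs
      simp only [proj, List.flatMap_cons, List.flatMap_nil, List.append_nil]
      exact ContextFreeGrammar.Derives.refl _
    · obtain ⟨r₀, hr₀, p, q, o, hann, rfl⟩ := hl
      rw [proj_ann hann]
      simpa [proj] using (ContextFreeGrammar.Produces.single
        ⟨r₀, hr₀, ContextFreeRule.Rewrites.input_output⟩)
    · obtain ⟨⟨p, a⟩, rfl⟩ := ht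
      simp only [proj, List.flatMap_cons, List.flatMap_nil, List.append_nil]
      exact ContextFreeGrammar.Derives.refl _

/-- `Trace p u q` : reading the sentential form `u` takes the DFA from `p` to `q`. -/
inductive Trace (g : ContextFreeGrammar.{0} T) (M : DFA T σ) :
    σ → List (Symbol T (N' σ g)) → σ → Prop
  | nil (p : σ) : Trace g M p [] p
  | term (p q : σ) (a : T) {rest : List (Symbol T (N' σ g))}
      (h : Trace g M (M.step p a) rest q) : Trace g M p (Symbol.terminal a :: rest) q
  | nt (p m q : σ) (s : g.NT ⊕ T) {rest : List (Symbol T (N' σ g))}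
      (h : Trace g M m rest q) : Trace g M p (Symbol.nonterminal (some (p, s, m)) :: rest) q

variable {M : DFA T σ}

omit [Fintype T] [Fintype σ] in
lemma Trace.append {p m q : σ} {u₁ u₂ : List (Symbol T (N' σ g))}
    (h₁ : Trace g M p u₁ m) (h₂ : Trace g M m u₂ q) : Trace g M p (u₁ ++ u₂) q := by
  induction h₁ with
  | nil => exact h₂
  | term p q a h ih => exact Trace.term _ _ _ (ih h₂)
  | nt p m' q s h ih => exact Trace.nt _ _ _ _ (ih h₂)

omit [Fintype T] [Fintype σ] in
lemma Trace.append_inv {p q : σ} {u₁ u₂ : List (Symbol T (N' σ g))}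
    (h : Trace g M p (u₁ ++ u₂) q) : ∃ m, Trace g M p u₁ m ∧ Trace g M m u₂ q := by
  induction u₁ generalizing p with
  | nil => exact ⟨p, Trace.nil p, h⟩
  | cons x rest ih =>
    cases h with
    | term p q a h' =>
      obtain ⟨m, h₁, h₂⟩ := ih h'
      exact ⟨m, Trace.term _ _ _ h₁, h₂⟩
    | nt p m' q s h' =>
      obtain ⟨m, h₁, h₂⟩ := ih h'
      exact ⟨m, Trace.nt _ _ _ _ h₁, h₂⟩

omit [Fintype T] [Fintype σ] in
lemma Trace.of_ann {p q : σ} {u : List (Symbol T g.NT)} {o : List (Symbol T (N' σ g))}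
    (h : Ann g p u o q) : Trace g M p o q := by
  induction h with
  | nil => exact Trace.nil _
  | cons p m q x h ih => exact Trace.nt _ _ _ _ ih

lemma Trace.preserved {p q : σ} {u v : List (Symbol T (N' σ g))}
    (hp : (prodGrammar g M).Produces u v) (h : Trace g M p u q) : Trace g M p v q := by
  obtain ⟨r, hr, hrw⟩ := hp
  obtain ⟨s, t, rfl, rfl⟩ := hrw.exists_parts
  obtain ⟨m₂, hs2, ht⟩ := h.append_inv
  obtain ⟨m₁, hs, hmid⟩ := hs2.append_inv
  refine Trace.append (hs.append ?_) ht
  rcases (mem_prod_rules g M).1 hr with hst | hl | htm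
  · obtain ⟨qa, hq, rfl⟩ := hst
    cases hmid
  · obtain ⟨r₀, hr₀, p', q', o, hann, rfl⟩ := hl
    cases hmid with
    | nt _ _ _ _ h' =>
      cases h'
      exact Trace.of_ann hann
  · obtain ⟨⟨p', a⟩, rfl⟩ := htm
    cases hmid with
    | nt _ _ _ _ h' =>
      cases h'
      exact Trace.term _ _ _ (Trace.nil _)

omit [Fintype T] [Fintype σ] in
lemma Trace.eval {p q : σ} {w : List T}
    (h : Trace g M p (w.map Symbol.terminal) q) : M.evalFrom p w = q := by
  induction w generalizing p with
  | nil => cases h; rfl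
  | cons a w ih =>
    cases h with
    | term _ _ _ h' => exact ih h'

lemma trace_derives {p q : σ} {u v : List (Symbol T (N' σ g))}
    (h : (prodGrammar g M).Derives u v) (hu : Trace g M p u q) : Trace g M p v q := by
  induction h with
  | refl => exact hu
  | tail _ hp ih => exact Trace.preserved hp ih

end Sound

section Complete

variable [Fintype T] [Fintype σ]

/-- Canonical annotation of a terminal word. -/
def annT (g : ContextFreeGrammar.{0} T) (M : DFA T σ) : σ → List T → List (Symbol T (N' σ g))
  | _, [] => []
  | p, a :: w => Symbol.nonterminal (some (p, Sum.inr a, M.step p a)) :: annT g M (M.step p a) w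

omit [Fintype T] [Fintype σ] in
lemma ann_annT (M : DFA T σ) (w : List T) (p : σ) :
    Ann g p (w.map Symbol.terminal) (annT g M p w) (M.evalFrom p w) := by
  induction w generalizing p with
  | nil => exact Ann.nil p
  | cons a w ih => exact Ann.cons p (M.step p a) _ (Symbol.terminal a) (ih (M.step p a))

lemma derives_annT (M : DFA T σ) (w : List T) (p : σ) :
    (prodGrammar g M).Derives (annT g M p w) (w.map Symbol.terminal) := by
  induction w generalizing p with
  | nil => exact ContextFreeGrammar.Derives.refl _
  | cons a w ih =>
    have hrule : (⟨some (p, Sum.inr a, M.step p a), [Symbol.terminal a]⟩ :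
        ContextFreeRule T (N' σ g)) ∈ (prodGrammar g M).rules :=
      (mem_prod_rules g M).2 (Or.inr (Or.inr ⟨(p, a), rfl⟩))
    have hstep : (prodGrammar g M).Produces (annT g M p (a :: w))
        ([Symbol.terminal a] ++ annT g M (M.step p a) w) :=
      ⟨_, hrule, by
        simpa [annT] using (ContextFreeRule.Rewrites.head (r := ⟨some (p, Sum.inr a, M.step p a),
          [Symbol.terminal a]⟩) (annT g M (M.step p a) w))⟩
    exact hstep.trans_derives ((ih (M.step p a)).append_left [Symbol.terminal a])

lemma complete_aux (M : DFA T σ) {u : List (Symbol T g.NT)} {w : List T}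
    (h : g.Derives u (w.map Symbol.terminal)) (p : σ) :
    ∃ u', Ann g p u u' (M.evalFrom p w) ∧
      (prodGrammar g M).Derives u' (w.map Symbol.terminal) := by
  induction h using Relation.ReflTransGen.head_induction_on with
  | refl => exact ⟨annT g M p w, ann_annT M w p, derives_annT M w p⟩
  | head hp _ ih =>
    obtain ⟨v', hann, hder⟩ := ih
    obtain ⟨r, hr, hrw⟩ := hp
    obtain ⟨s, t, rfl, rfl⟩ := hrw.exists_parts
    obtain ⟨o₁₂, o₃, m₂, rfl, h12, h3⟩ := hann.append_inv
    obtain ⟨o₁, o₂, m₁, rfl, h1, h2⟩ := h12.append_inv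
    refine ⟨o₁ ++ [Symbol.nonterminal (some (m₁, Sum.inl r.input, m₂))] ++ o₃,
      (h1.append (Ann.cons m₁ m₂ m₂ (Symbol.nonterminal r.input) (Ann.nil m₂))).append h3,
      ?_⟩
    have hrule : (⟨some (m₁, Sum.inl r.input, m₂), o₂⟩ :
        ContextFreeRule T (N' σ g)) ∈ (prodGrammar g M).rules :=
      (mem_prod_rules g M).2 (Or.inr (Or.inl ⟨r, hr, m₁, m₂, o₂, h2, rfl⟩))
    exact (ContextFreeGrammar.Produces.trans_derives
      ⟨_, hrule, ContextFreeRule.rewrites_of_exists_parts _ o₁ o₃⟩ hder)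

theorem prod_language (g : ContextFreeGrammar.{0} T) (M : DFA T σ) :
    (prodGrammar g M).language = g.language ⊓ M.accepts := by
  ext w
  constructor
  · intro hw
    have hder : (prodGrammar g M).Derives [Symbol.nonterminal none]
        (w.map Symbol.terminal) := hw
    constructor
    · have := derives_proj M hder
      rw [proj_map_terminal] at this
      exact (by simpa [proj, ContextFreeGrammar.mem_language_iff, List.flatMap_cons] using this :
        g.Derives [Symbol.nonterminal g.initial] (w.map Symbol.terminal))
    · rcases hder.eq_or_head with heq | ⟨v, hpv, hder'⟩
      · cases w with
        | nil => exact absurd heq (by simp)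
        | cons a w => exact absurd heq (by simp)
      · obtain ⟨r, hr, hrw⟩ := hpv
        rcases (mem_prod_rules g M).1 hr with hst | hl | htm
        · obtain ⟨q, hq, rfl⟩ := hst
          obtain ⟨s, t, hu, rfl⟩ := hrw.exists_parts
          obtain ⟨rfl, rfl⟩ : s = [] ∧ t = [] := by
            cases s with
            | nil => refine ⟨rfl, ?_⟩; simpa using hu.symm
            | cons x s =>
              exfalso
              have := congrArg List.length hu
              simp at this
          have htr : Trace g M M.start
              ([] ++ [Symbol.nonterminal (some (M.start, Sum.inl g.initial, q))] ++ []) q :=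
            Trace.nt _ _ _ _ (Trace.nil q)
          have := (trace_derives hder' htr).eval
          change M.evalFrom M.start w ∈ M.accept
          rw [← this] at hq
          exact hq
        · obtain ⟨r₀, hr₀, p', q', o, hann, rfl⟩ := hl
          obtain ⟨s, t, hu, rfl⟩ := hrw.exists_parts
          exfalso
          cases s with
          | nil => simp at hu
          | cons x s => simp at hu
        · obtain ⟨⟨p', a⟩, rfl⟩ := htm
          obtain ⟨s, t, hu, rfl⟩ := hrw.exists_parts
          exfalso
          cases s with
          | nil => simp at hu
          | cons x s => simp at hu
  · rintro ⟨hL, hR⟩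
    obtain ⟨u', hann, hder⟩ := complete_aux M (g := g)
      (u := [Symbol.nonterminal g.initial]) hL M.start
    rw [Ann.singleton_inv hann] at hder
    have hrule : (⟨none, [Symbol.nonterminal
        (some (M.start, Sum.inl g.initial, M.evalFrom M.start w))]⟩ :
        ContextFreeRule T (N' σ g)) ∈ (prodGrammar g M).rules :=
      (mem_prod_rules g M).2 (Or.inl ⟨M.evalFrom M.start w, hR, rfl⟩)
    have hrw : (⟨none, [Symbol.nonterminal
        (some (M.start, Sum.inl g.initial, M.evalFrom M.start w))]⟩ :
        ContextFreeRule T (N' σ g)).Rewrites [Symbol.nonterminal none]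
        ([Symbol.nonterminal (some (M.start, Sum.inl g.initial, M.evalFrom M.start w))] ++ []) :=
      ContextFreeRule.Rewrites.head []
    rw [List.append_nil] at hrw
    exact (ContextFreeGrammar.Produces.trans_derives ⟨_, hrule, hrw⟩ hder)

end Complete

end BarHillel

/-- Corollary 6.3 (for context-free languages): the intersection of a context-free
language with a rational (regular) language is context-free. -/
theorem contextFree_inter_regular {α : Type} [Fintype α] (L R : Language α)
    (hL : L.IsContextFree) (hR : R.IsRegular) : Language.IsContextFree (L ⊓ R) := by
  obtain ⟨g, rfl⟩ := hL
  obtain ⟨σ, _, M, rfl⟩ := hR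
  exact ⟨BarHillel.prodGrammar g M, BarHillel.prod_language g M⟩
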